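/- Under the hypotheses of the discrete blow-up lemma (assumptions (A1), (CFL), u ≥ 0 solving the scheme with ‖u(·,t_n)‖_∞^{p−1} > ‖ω(·,h)‖_{ℓ¹} for some n), the total time T_{h,τ} = Σ_{j=0}^∞ τ_j is finite and lim_{j→∞} (T_{h,τ} − t_j) ‖u(·,t_j)‖_∞^{p−1} = τ(1+τ)^{p−1} / ((1+τ)^{p−1} − 1). -/

import Mathlib

open Real Filter

/-- The discrete diffusion operator `L_h φ(x_α) = Σ_{β≠0} (φ(x_α + x_β) - φ(x_α)) ω(β)`. -/
noncomputable def discreteLh {N : ℕ} (ω : (Fin N → ℤ) → ℝ) (φ : (Fin N → ℤ) → ℝ)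
    (α : Fin N → ℤ) : ℝ :=
  ∑' β : Fin N → ℤ, (φ (α + β) - φ α) * ω β

set_option maxHeartbeats 2000000 in
/-- Under (A1), (CFL) and the blow-up condition `‖u(·,tₙ)‖_∞^{p-1} > ‖ω‖_{ℓ¹}`, the total
time `T_{h,τ} = Σⱼ τⱼ` is finite and
`(T_{h,τ} - tⱼ)‖u(·,tⱼ)‖_∞^{p-1} → τ(1+τ)^{p-1}/((1+τ)^{p-1} - 1)`. -/
theorem stmt12 (N : ℕ) (p τ : ℝ) (hp : 1 < p) (hτ : 0 < τ)
    (ω : (Fin N → ℤ) → ℝ)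
    (hsym : ∀ α, ω (-α) = ω α) (hnonneg : ∀ α, 0 ≤ ω α) (hω0 : ω 0 = 0)
    (hsum : Summable ω) (hpos : 0 < ∑' α, ω α)
    (hCFL : τ ≤ 1 / (4 * ∑' α, ω α))
    (u : ℕ → (Fin N → ℤ) → ℝ) (hu : ∀ j α, 0 ≤ u j α)
    (hbdd : ∀ j, BddAbove (Set.range (u j)))
    (Un : ℕ → ℝ) (hUn : ∀ j, Un j = ⨆ α, u j α)
    (τs : ℕ → ℝ) (hτs : ∀ j, τs j = τ * min 1 (Un j ^ (1 - p)))
    (hscheme : ∀ j α, u (j + 1) α = u j α + τs j * (discreteLh ω (u j) α + u j α ^ p))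
    (t : ℕ → ℝ) (ht : ∀ j, t j = ∑ k ∈ Finset.range j, τs k)
    (n : ℕ) (hn : (∑' α, ω α) < Un n ^ (p - 1)) :
    Summable τs ∧
    Tendsto (fun j => ((∑' k, τs k) - t j) * Un j ^ (p - 1)) atTop
      (nhds (τ * (1 + τ) ^ (p - 1) / ((1 + τ) ^ (p - 1) - 1))) := by
  have hp1 : (0:ℝ) < p - 1 := by linarith
  set S : ℝ := ∑' α, ω α with hSdef
  have hNE : Nonempty (Fin N → ℤ) := ⟨fun _ => 0⟩
  have hle : ∀ j α, u j α ≤ Un j := fun j α => (hUn j) ▸ le_ciSup (hbdd j) α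
  have hVnn : ∀ j, 0 ≤ Un j := fun j => le_trans (hu j (fun _ => 0)) (hle j _)
  have hτsnn : ∀ j, 0 ≤ τs j := by
    intro j; rw [hτs j]
    have h1 : (0:ℝ) ≤ min 1 (Un j ^ (1 - p)) :=
      le_min zero_le_one (Real.rpow_nonneg (hVnn j) _)
    positivity
  have hτsle : ∀ j, τs j ≤ τ := by
    intro j; rw [hτs j]
    have h1 := min_le_left (1:ℝ) (Un j ^ (1 - p))
    have h2 : (0:ℝ) ≤ min 1 (Un j ^ (1 - p)) :=
      le_min zero_le_one (Real.rpow_nonneg (hVnn j) _)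
    nlinarith
  have hτsS : ∀ j, τs j * S ≤ 1/4 := by
    intro j
    have h1 : τ * S ≤ 1/4 := by
      rw [le_div_iff₀ (by positivity)] at hCFL
      nlinarith [hCFL]
    calc τs j * S ≤ τ * S := by nlinarith [hτsle j, hτsnn j]
    _ ≤ 1/4 := h1
  have hcfl1 : ∀ j, 0 ≤ 1 - τs j * S := fun j => by nlinarith [hτsS j]
  -- Lh bounds
  have hLsum : ∀ j α, Summable (fun β => (u j (α+β) - u j α) * ω β) := by
    intro j α
    apply Summable.of_norm_bounded (hsum.mul_left (2 * Un j))
    intro β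
    rw [norm_mul, Real.norm_of_nonneg (hnonneg β)]
    have := hle j (α + β); have := hle j α; have := hu j (α+β); have := hu j α
    have hb : ‖u j (α+β) - u j α‖ ≤ 2 * Un j := by
      rw [Real.norm_eq_abs, abs_le]; constructor <;> nlinarith
    nlinarith [hnonneg β, hb, norm_nonneg (u j (α+β) - u j α)]
  have hLup : ∀ j α, discreteLh ω (u j) α ≤ (Un j - u j α) * S := by
    intro j α
    have : (Un j - u j α) * S = ∑' β, (Un j - u j α) * ω β := (tsum_mul_left).symm
    rw [this]
    exact Summable.tsum_le_tsum (fun β => by nlinarith [hle j (α+β), hnonneg β])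
      (hLsum j α) (hsum.mul_left _)
  have hLlo : ∀ j α, -(u j α * S) ≤ discreteLh ω (u j) α := by
    intro j α
    have : -(u j α * S) = ∑' β, -(u j α * ω β) := by
      rw [tsum_neg, tsum_mul_left]
    rw [this]
    exact Summable.tsum_le_tsum (fun β => by nlinarith [hu j (α+β), hnonneg β])
      ((hsum.mul_left _).neg) (hLsum j α)
  -- per-step upper bound
  have hupper : ∀ j, Un (j+1) ≤ Un j + τs j * Un j ^ p := by
    intro j
    rw [hUn (j+1)]
    apply ciSup_le
    intro α
    rw [hscheme j α]
    have h1 := hLup j α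
    have h2 : u j α ^ p ≤ Un j ^ p :=
      Real.rpow_le_rpow (hu j α) (hle j α) (by linarith)
    nlinarith [hcfl1 j, hτsnn j, hle j α]
  -- per-step lower bound
  have hlower : ∀ j, Un j * (1 - τs j * S) + τs j * Un j ^ p ≤ Un (j+1) := by
    intro j
    set g : ℝ → ℝ := fun x => x * (1 - τs j * S) + τs j * (max x 0) ^ p with hg
    have hgmono : Monotone g := by
      intro x y hxy
      have h1 : (max x 0) ^ p ≤ (max y 0) ^ p :=
        Real.rpow_le_rpow (le_max_right x 0) (max_le_max hxy le_rfl) (by linarith)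
      simp only [hg]
      nlinarith [hcfl1 j, hτsnn j]
    have hgcont : ContinuousAt g (⨆ α, u j α) := by
      apply ContinuousAt.add
      · exact (continuous_id.mul continuous_const).continuousAt
      · exact continuousAt_const.mul
          ((Real.continuousAt_rpow_const _ _ (Or.inr (by linarith))).comp
            ((continuous_id.max continuous_const).continuousAt))
    have key : g (⨆ α, u j α) = ⨆ α, g (u j α) :=
      hgmono.map_ciSup_of_continuousAt hgcont (hbdd j)
    have h1 : ∀ α, g (u j α) ≤ Un (j+1) := by
      intro α
      have h2 : g (u j α) ≤ u (j+1) α := by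
        rw [hscheme j α]
        have h3 := hLlo j α
        have hmax : max (u j α) 0 = u j α := max_eq_left (hu j α)
        simp only [hg, hmax]
        nlinarith [hτsnn j]
      exact h2.trans (hle (j+1) α)
    have h2 : g (Un j) ≤ Un (j+1) := by
      rw [hUn j, key]; exact ciSup_le h1
    have h3 : g (Un j) = Un j * (1 - τs j * S) + τs j * Un j ^ p := by
      simp only [hg, max_eq_left (hVnn j)]
    linarith [h2, h3.symm.le]
  -- the blow-up condition propagates
  have hstep : ∀ j, S < Un j ^ (p-1) → 0 < Un j ∧ Un j ≤ Un (j+1) ∧ S < Un (j+1) ^ (p-1) := by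
    intro j hj
    have hV : 0 < Un j := by
      rcases (hVnn j).lt_or_eq with h | h
      · exact h
      · exfalso; rw [← h, Real.zero_rpow (by linarith)] at hj; linarith
    have hVp : Un j ^ p = Un j ^ (p-1) * Un j := by
      nth_rewrite 1 [show p = (p-1) + 1 by ring]
      rw [Real.rpow_add hV, Real.rpow_one]
    have h2 : Un j ≤ Un (j+1) := by
      have h4 := hlower j
      rw [hVp] at h4
      have h5 : 0 ≤ τs j * (Un j * (Un j ^ (p-1) - S)) :=
        mul_nonneg (hτsnn j) (mul_nonneg hV.le (by linarith))
      nlinarith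
    exact ⟨hV, h2, lt_of_lt_of_le hj (Real.rpow_le_rpow (hVnn j) h2 (by linarith))⟩
  have hmono : ∀ m, S < Un (n+m) ^ (p-1) ∧ Un n ≤ Un (n+m) := by
    intro m
    induction m with
    | zero => exact ⟨hn, le_rfl⟩
    | succ m ih =>
      obtain ⟨h1, h2, h3⟩ := hstep _ ih.1
      exact ⟨h3, ih.2.trans h2⟩
  have hV0n : 0 < Un n := (hstep n hn).1
  set δ : ℝ := Un n ^ (p-1) - S with hδdef
  have hδ : 0 < δ := by rw [hδdef]; linarith
  set c : ℝ := τ * min δ (δ / (S + δ)) with hcdef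
  have hc : 0 < c := mul_pos hτ (lt_min hδ (div_pos hδ (by linarith)))
  have hgrow : ∀ j, n ≤ j → (1 + c) * Un j ≤ Un (j+1) := by
    intro j hj
    obtain ⟨m, rfl⟩ := le_iff_exists_add.mp hj
    obtain ⟨hSlt, hnle⟩ := hmono m
    have hV : 0 < Un (n+m) := (hstep _ hSlt).1
    set V := Un (n+m) with hVdef
    set A := V ^ (p-1) with hAdef
    have hAge : S + δ ≤ A := by
      have := Real.rpow_le_rpow (hVnn n) hnle (by linarith : (0:ℝ) ≤ p-1)
      rw [hδdef]; linarith
    have hApos : 0 < A := by linarith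
    have hinv : V ^ (1-p) = A⁻¹ := by
      rw [show (1:ℝ)-p = -(p-1) by ring, Real.rpow_neg hV.le, hAdef]
    have hAinv : A⁻¹ ≤ (S + δ)⁻¹ := inv_anti₀ (by linarith) hAge
    have hkey : c ≤ τs (n+m) * (A - S) := by
      rw [hτs (n+m), hinv, mul_assoc, min_mul_of_nonneg _ _ (by linarith : (0:ℝ) ≤ A - S)]
      have e1 : δ ≤ 1 * (A - S) := by linarith
      have e2 : δ / (S + δ) ≤ A⁻¹ * (A - S) := by
        have h6 : A⁻¹ * (A - S) = 1 - S * A⁻¹ := by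
          field_simp
        rw [h6]
        have h7 : S * A⁻¹ ≤ S * (S+δ)⁻¹ := by nlinarith [hpos]
        have h8 : S * (S+δ)⁻¹ = 1 - δ / (S+δ) := by
          field_simp
          ring
        linarith
      exact mul_le_mul_of_nonneg_left (min_le_min e1 e2) hτ.le
    have h4 := hlower (n+m)
    have hVp : V ^ p = A * V := by
      rw [hAdef]
      nth_rewrite 1 [show p = (p-1) + 1 by ring]
      rw [Real.rpow_add hV, Real.rpow_one]
    rw [hVp] at h4
    have h5 : (1 + c) * V ≤ V * (1 - τs (n+m) * S) + τs (n+m) * (A * V) := by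
      nlinarith [hV.le, hkey]
    linarith
  have hgeom : ∀ m, (1+c)^m * Un n ≤ Un (n+m) := by
    intro m; induction m with
    | zero => simp
    | succ m ih =>
      have h1 := hgrow (n+m) (Nat.le_add_right n m)
      have h2 : (0:ℝ) < (1+c)^m := by positivity
      calc (1+c)^(m+1) * Un n = (1+c) * ((1+c)^m * Un n) := by ring
        _ ≤ (1+c) * Un (n+m) := by nlinarith
        _ ≤ Un (n+m+1) := h1
  have hVtop : Tendsto Un atTop atTop := by
    rw [← tendsto_add_atTop_iff_nat n]
    apply tendsto_atTop_mono (fun m => ?_)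
      ((tendsto_pow_atTop_atTop_of_one_lt (by linarith : (1:ℝ) < 1+c)).atTop_mul_const hV0n)
    simpa [add_comm c 1, add_comm m n] using hgeom m
  have hVptop : Tendsto (fun j => Un j ^ (p-1)) atTop atTop :=
    (tendsto_rpow_atTop hp1).comp hVtop
  -- good indices for a tolerance ε
  have hGood : ∀ ε > (0:ℝ), ∃ J, ∀ k, J ≤ k →
      1 ≤ Un k ∧ τ * S * Un k ^ (1-p) ≤ (1+τ) * ε := by
    intro ε hε
    have h1 : ∀ᶠ k in atTop, 1 ≤ Un k := hVtop.eventually_ge_atTop 1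
    have h2 : ∀ᶠ k in atTop, τ * S / ((1+τ) * ε) ≤ Un k ^ (p-1) :=
      hVptop.eventually_ge_atTop _
    obtain ⟨J, hJ⟩ := (h1.and h2).exists_forall_of_atTop
    refine ⟨J, fun k hk => ⟨(hJ k hk).1, ?_⟩⟩
    obtain ⟨hk1, hk2⟩ := hJ k hk
    have hV : (0:ℝ) < Un k := by linarith
    have hA : (0:ℝ) < Un k ^ (p-1) := Real.rpow_pos_of_pos hV _
    have hinv : Un k ^ (1-p) = (Un k ^ (p-1))⁻¹ := by
      rw [show (1:ℝ)-p = -(p-1) by ring, Real.rpow_neg hV.le]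
    rw [hinv]
    rw [div_le_iff₀ (by positivity)] at hk2
    rw [mul_inv_le_iff₀ hA]
    linear_combination hk2
  -- per-step two-sided ratio bounds at good indices
  have hstepε : ∀ ε : ℝ, ∀ k, 1 ≤ Un k → τ * S * Un k ^ (1-p) ≤ (1+τ) * ε →
      (1+τ)*(1-ε) * Un k ≤ Un (k+1) ∧ Un (k+1) ≤ (1+τ) * Un k := by
    intro ε k h1 h2
    have hV : (0:ℝ) < Un k := by linarith
    have hmin : min 1 (Un k ^ (1-p)) = Un k ^ (1-p) :=
      min_eq_right (Real.rpow_le_one_of_one_le_of_nonpos h1 (by linarith))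
    have hτsk : τs k = τ * Un k ^ (1-p) := by rw [hτs k, hmin]
    have hVp : τs k * Un k ^ p = τ * Un k := by
      rw [hτsk, mul_assoc, ← Real.rpow_add hV, show (1:ℝ)-p+p = 1 by ring, Real.rpow_one]
    constructor
    · have h4 := hlower k
      rw [hVp] at h4
      have h5 : τs k * S = τ * S * Un k ^ (1-p) := by rw [hτsk]; ring
      have h6 : τs k * S ≤ (1+τ)*ε := by rw [h5]; exact h2
      linarith [mul_le_mul_of_nonneg_right h6 hV.le]
    · have h4 := hupper k
      rw [hVp] at h4
      linarith
  -- iterated ratio bounds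
  have hrat : ∀ ε : ℝ, ε ≤ 1/2 → ∀ J, (∀ k, J ≤ k → 1 ≤ Un k ∧ τ*S*Un k^(1-p) ≤ (1+τ)*ε) →
      ∀ j, J ≤ j → ∀ m, Un j * ((1+τ)*(1-ε))^m ≤ Un (j+m) ∧ Un (j+m) ≤ Un j * (1+τ)^m := by
    intro ε hε J hJ j hj m
    have hr0 : (0:ℝ) ≤ (1+τ)*(1-ε) := by nlinarith
    induction m with
    | zero => simp
    | succ m ih =>
      obtain ⟨ih1, ih2⟩ := ih
      have hk : J ≤ j + m := le_trans hj (Nat.le_add_right j m)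
      obtain ⟨hg1, hg2⟩ := hJ (j+m) hk
      obtain ⟨hs1, hs2⟩ := hstepε ε (j+m) hg1 hg2
      constructor
      · calc Un j * ((1+τ)*(1-ε))^(m+1) = (1+τ)*(1-ε) * (Un j * ((1+τ)*(1-ε))^m) := by ring
          _ ≤ (1+τ)*(1-ε) * Un (j+m) := by nlinarith
          _ ≤ Un (j+m+1) := hs1
      · calc Un (j+m+1) ≤ (1+τ) * Un (j+m) := hs2
          _ ≤ (1+τ) * (Un j * (1+τ)^m) := by nlinarith
          _ = Un j * (1+τ)^(m+1) := by ring
  -- rpow/pow juggling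
  have hpowmul : ∀ x : ℝ, 0 ≤ x → ∀ m : ℕ, (x^m)^(p-1) = (x^(p-1))^m := by
    intro x hx m
    rw [← Real.rpow_natCast x m, ← Real.rpow_natCast (x^(p-1)) m,
      ← Real.rpow_mul hx, ← Real.rpow_mul hx, mul_comm]
  have honelt : ∀ x : ℝ, 1 < x → 1 < x^(p-1) := by
    intro x hx
    have h := Real.rpow_lt_rpow (by norm_num) hx hp1
    rwa [Real.one_rpow] at h
  -- two-sided bounds for the tail terms
  have habound : ∀ ε : ℝ, ε ≤ 1/2 →
      ∀ J, (∀ k, J ≤ k → 1 ≤ Un k ∧ τ*S*Un k^(1-p) ≤ (1+τ)*ε) →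
      ∀ j, J ≤ j → ∀ m : ℕ,
      τ * (((1+τ)^(p-1))⁻¹)^m ≤ τs (m+j) * Un j ^ (p-1) ∧
      τs (m+j) * Un j ^ (p-1) ≤ τ * ((((1+τ)*(1-ε))^(p-1))⁻¹)^m := by
    intro ε hε J hJ j hj m
    have hr0 : (0:ℝ) < (1+τ)*(1-ε) := by nlinarith
    obtain ⟨hlo, hhi⟩ := hrat ε hε J hJ j hj m
    have hVj : (1:ℝ) ≤ Un j := (hJ j hj).1
    have hVk : (1:ℝ) ≤ Un (j+m) := (hJ (j+m) (hj.trans (Nat.le_add_right j m))).1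
    have hVk0 : (0:ℝ) < Un (j+m) := by linarith
    have hVj0 : (0:ℝ) < Un j := by linarith
    have hτsk : τs (m+j) = τ * (Un (j+m) ^ (p-1))⁻¹ := by
      rw [add_comm m j, hτs (j+m),
        min_eq_right (Real.rpow_le_one_of_one_le_of_nonpos hVk (by linarith)),
        show (1:ℝ)-p = -(p-1) by ring, Real.rpow_neg hVk0.le]
    have hAj : (0:ℝ) < Un j ^ (p-1) := Real.rpow_pos_of_pos hVj0 _
    have h1 : Un j^(p-1) * (((1+τ)*(1-ε))^(p-1))^m ≤ Un (j+m)^(p-1) := by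
      have h := Real.rpow_le_rpow (by positivity) hlo hp1.le
      rwa [Real.mul_rpow hVj0.le (by positivity), hpowmul _ hr0.le m] at h
    have h2 : Un (j+m)^(p-1) ≤ Un j^(p-1) * ((1+τ)^(p-1))^m := by
      have h := Real.rpow_le_rpow (by positivity) hhi hp1.le
      rwa [Real.mul_rpow hVj0.le (by positivity), hpowmul _ (by linarith : (0:ℝ) ≤ 1+τ) m] at h
    constructor
    · have h4 : (Un j^(p-1))⁻¹ * (((1+τ)^(p-1))^m)⁻¹ ≤ (Un (j+m)^(p-1))⁻¹ := by
        rw [← mul_inv]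
        exact inv_anti₀ (Real.rpow_pos_of_pos hVk0 _) h2
      calc τ * (((1+τ)^(p-1))⁻¹)^m
          = τ * ((Un j^(p-1))⁻¹ * (((1+τ)^(p-1))^m)⁻¹) * Un j^(p-1) := by
            rw [inv_pow]; field_simp
        _ ≤ τ * (Un (j+m)^(p-1))⁻¹ * Un j^(p-1) := by
            have h5 := mul_le_mul_of_nonneg_left h4 hτ.le
            exact mul_le_mul_of_nonneg_right h5 hAj.le
        _ = τs (m+j) * Un j^(p-1) := by rw [hτsk]
    · have h3 : (Un (j+m)^(p-1))⁻¹ ≤ (Un j^(p-1))⁻¹ * ((((1+τ)*(1-ε))^(p-1))^m)⁻¹ := by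
        rw [← mul_inv]
        exact inv_anti₀ (by positivity) h1
      calc τs (m+j) * Un j^(p-1) = τ * (Un (j+m)^(p-1))⁻¹ * Un j^(p-1) := by rw [hτsk]
        _ ≤ τ * ((Un j^(p-1))⁻¹ * ((((1+τ)*(1-ε))^(p-1))^m)⁻¹) * Un j^(p-1) := by
            have h5 := mul_le_mul_of_nonneg_left h3 hτ.le
            exact mul_le_mul_of_nonneg_right h5 hAj.le
        _ = τ * ((((1+τ)*(1-ε))^(p-1))⁻¹)^m := by
            rw [inv_pow]; field_simp
  -- the reference tolerance
  set ε₀ : ℝ := τ / (2*(1+τ)) with hε₀def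
  have hε₀pos : 0 < ε₀ := by rw [hε₀def]; positivity
  have hε₀half : ε₀ ≤ 1/2 := by
    rw [hε₀def, div_le_div_iff₀ (by positivity) (by norm_num)]; nlinarith
  obtain ⟨J₀, hJ₀⟩ := hGood ε₀ hε₀pos
  have hrε₀ : (1+τ)*(1-ε₀) = 1 + τ/2 := by
    rw [hε₀def]; field_simp; ring
  -- summability of the time steps
  have hτs_sum : Summable τs := by
    rw [← summable_nat_add_iff J₀]
    have h1lt : (1:ℝ) < (1+τ/2)^(p-1) := honelt _ (by linarith)
    have hρ0 : (0:ℝ) ≤ (((1+τ/2):ℝ)^(p-1))⁻¹ := by positivity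
    have hρ1 : (((1+τ/2):ℝ)^(p-1))⁻¹ < 1 := by rw [inv_lt_one_iff₀]; right; exact h1lt
    apply Summable.of_nonneg_of_le (fun m => hτsnn _) (fun m => ?_)
      ((summable_geometric_of_lt_one hρ0 hρ1).mul_left τ)
    have h := (habound ε₀ hε₀half J₀ hJ₀ J₀ le_rfl m).2
    rw [hrε₀] at h
    have hA1 : (1:ℝ) ≤ Un J₀ ^ (p-1) := by
      have h2 := Real.rpow_le_rpow (by norm_num) (hJ₀ J₀ le_rfl).1 hp1.le
      rwa [Real.one_rpow] at h2
    nlinarith [hτsnn (m + J₀)]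
  have htails : ∀ j, Summable (fun m => τs (m + j)) :=
    fun j => (summable_nat_add_iff j).mpr hτs_sum
  have htail : ∀ j, (∑' k, τs k) - t j = ∑' m, τs (m + j) := by
    intro j
    have h := Summable.sum_add_tsum_nat_add j hτs_sum
    rw [ht j]; linarith
  -- value of the geometric sums
  have hgsum : ∀ x : ℝ, 1 < x → ∑' m : ℕ, τ * ((x^(p-1))⁻¹)^m = τ * x^(p-1) / (x^(p-1) - 1) := by
    intro x hx
    have h1 : 1 < x^(p-1) := honelt x hx
    rw [tsum_mul_left, tsum_geometric_of_lt_one (by positivity)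
      (by rw [inv_lt_one_iff₀]; right; exact h1)]
    have hne2 : x^(p-1) ≠ 0 := by positivity
    have h2 : (1 - (x^(p-1))⁻¹) = (x^(p-1)-1)/x^(p-1) := by
      rw [eq_div_iff hne2, sub_mul, one_mul, inv_mul_cancel₀ hne2]
    rw [h2, inv_div]
    ring
  refine ⟨hτs_sum, ?_⟩
  -- the limit value as a function of the tolerance
  set φ : ℝ → ℝ := fun e => τ * ((1+τ)*(1-e))^(p-1) / (((1+τ)*(1-e))^(p-1) - 1) with hφdef
  set L : ℝ := τ * (1 + τ) ^ (p - 1) / ((1 + τ) ^ (p - 1) - 1) with hLdef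
  have hbasec : ContinuousAt (fun e : ℝ => ((1+τ)*(1-e))^(p-1)) 0 := by
    apply ContinuousAt.rpow_const
      ((continuous_const.mul (continuous_const.sub continuous_id)).continuousAt)
    left; norm_num; positivity
  have hb0 : ((1+τ)*(1-(0:ℝ)))^(p-1) = (1+τ)^(p-1) := by norm_num
  have hq1 : (1:ℝ) < (1+τ)^(p-1) := honelt _ (by linarith)
  have hφc : ContinuousAt φ 0 := by
    apply ContinuousAt.div (continuousAt_const.mul hbasec) (hbasec.sub continuousAt_const)
    show ((1+τ)*(1-(0:ℝ)))^(p-1) - 1 ≠ 0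
    rw [hb0]; intro h; rw [sub_eq_zero] at h; rw [h] at hq1; exact lt_irrefl _ hq1
  have hφ0 : φ 0 = L := by simp only [hφdef, hLdef, hb0]
  have hφt : Tendsto φ (nhdsWithin 0 (Set.Ioi 0)) (nhds L) := by
    rw [← hφ0]
    exact hφc.continuousWithinAt.tendsto
  rw [Metric.tendsto_atTop]
  intro η hη
  -- choose a tolerance ε
  have hev1 : ∀ᶠ e in nhdsWithin (0:ℝ) (Set.Ioi 0), φ e < L + η :=
    hφt.eventually_lt_const (by linarith)
  have hev2 : Set.Ioo (0:ℝ) (min (1/2) (τ/(2*(1+τ)))) ∈ nhdsWithin (0:ℝ) (Set.Ioi 0) :=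
    Ioo_mem_nhdsGT_of_mem ⟨le_refl 0, lt_min (by norm_num) (by positivity)⟩
  obtain ⟨ε, hφε, hε0, hεlt⟩ := (hev1.and hev2).exists
  have hεpos : 0 < ε := hε0
  have hεhalf : ε ≤ 1/2 := le_of_lt (lt_of_lt_of_le hεlt (min_le_left _ _))
  have hεsmall : ε < τ/(2*(1+τ)) := lt_of_lt_of_le hεlt (min_le_right _ _)
  have hr1 : (1:ℝ) < (1+τ)*(1-ε) := by
    have h1 : ε * (2*(1+τ)) < τ := (lt_div_iff₀ (by positivity)).mp hεsmall
    nlinarith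
  obtain ⟨J₁, hJ₁⟩ := hGood ε hεpos
  refine ⟨max J₀ J₁, fun j hj => ?_⟩
  have hjJ₀ : J₀ ≤ j := le_trans (le_max_left _ _) hj
  have hjJ₁ : J₁ ≤ j := le_trans (le_max_right _ _) hj
  -- rewrite as a tail series
  rw [htail j, ← tsum_mul_right]
  have hsumA : Summable (fun m => τs (m + j) * Un j ^ (p-1)) := (htails j).mul_right _
  have hsumq : Summable (fun m : ℕ => τ * (((1+τ)^(p-1))⁻¹)^m) :=
    (summable_geometric_of_lt_one (by positivity)
      (by rw [inv_lt_one_iff₀]; right; exact hq1)).mul_left τ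
  have hsumr : Summable (fun m : ℕ => τ * ((((1+τ)*(1-ε))^(p-1))⁻¹)^m) :=
    (summable_geometric_of_lt_one (by positivity)
      (by rw [inv_lt_one_iff₀]; right; exact honelt _ hr1)).mul_left τ
  have hlowb : L ≤ ∑' m, τs (m + j) * Un j ^ (p-1) := by
    rw [hLdef, ← hgsum (1+τ) (by linarith)]
    exact Summable.tsum_le_tsum (fun m => (habound ε₀ hε₀half J₀ hJ₀ j hjJ₀ m).1) hsumq hsumA
  have hupb : (∑' m, τs (m + j) * Un j ^ (p-1)) ≤ φ ε := by
    have hφεval : φ ε = τ * ((1+τ)*(1-ε))^(p-1) / (((1+τ)*(1-ε))^(p-1) - 1) := rfl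
    rw [hφεval, ← hgsum ((1+τ)*(1-ε)) hr1]
    exact Summable.tsum_le_tsum (fun m => (habound ε hεhalf J₁ hJ₁ j hjJ₁ m).2) hsumA hsumr
  rw [Real.dist_eq, abs_lt]
  constructor <;> linarith
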